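/- If n is a non-Cayley number (i.e., there exists a vertex-transitive graph of order n that is not a Cayley graph) and m is a positive integer, then nm is also a non-Cayley number. Concretely: if Γ is a vertex-transitive graph on n vertices that is not a Cayley graph, then the disjoint union of m copies of Γ is a vertex-transitive graph on nm vertices that is not a Cayley graph. -/

import Mathlib

/-- A graph is vertex-transitive if its automorphism group acts transitively on vertices. -/
def IsVertexTransitive {V : Type} (Γ : SimpleGraph V) : Prop :=
  ∀ u v : V, ∃ e : Γ ≃g Γ, e u = v

/-- The Cayley graph of a group `R` with connection set `S`: `g ~ h` iff `g * h⁻¹ ∈ S`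
(symmetrized; loops removed). -/
def cayleyGraph (R : Type) [Group R] (S : Set R) : SimpleGraph R :=
  SimpleGraph.fromRel (fun g h => g * h⁻¹ ∈ S)

/-- A graph is a Cayley graph if it is isomorphic to `Cay(R,S)` for some group `R`
and inverse-closed `S ⊆ R`. -/
def IsCayleyGraph {V : Type} (Γ : SimpleGraph V) : Prop :=
  ∃ (R : Type) (_ : Group R) (S : Set R),
    (∀ s ∈ S, s⁻¹ ∈ S) ∧ Nonempty (Γ ≃g cayleyGraph R S)

/-- The disjoint union of `m` copies of `Γ`. -/
def copies {V : Type} (Γ : SimpleGraph V) (m : ℕ) : SimpleGraph (Fin m × V) where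
  Adj x y := x.1 = y.1 ∧ Γ.Adj x.2 y.2
  symm := ⟨by intro x y h; exact ⟨h.1.symm, h.2.symm⟩⟩
  loopless := ⟨by intro x h; exact Γ.irrefl h.2⟩

section Aux

variable {R : Type} [Group R] {S : Set R}

lemma cay_adj {g h : R} :
    (cayleyGraph R S).Adj g h ↔ g ≠ h ∧ (g * h⁻¹ ∈ S ∨ h * g⁻¹ ∈ S) := by
  simp [cayleyGraph, SimpleGraph.fromRel_adj]

/-- Right multiplication is an automorphism of a Cayley graph. -/
def cayMulRight (g : R) : cayleyGraph R S ≃g cayleyGraph R S where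
  toEquiv := Equiv.mulRight g
  map_rel_iff' := by
    intro a b
    simp [cay_adj, mul_assoc, mul_inv_rev]

lemma cay_reach_one {x : R} (hx : x ∈ Subgroup.closure S) :
    (cayleyGraph R S).Reachable x 1 := by
  induction hx using Subgroup.closure_induction with
  | mem s hs =>
    by_cases h1 : s = 1
    · subst h1; exact SimpleGraph.Reachable.refl 1
    · exact SimpleGraph.Adj.reachable (cay_adj.mpr ⟨h1, Or.inl (by simpa using hs)⟩)
  | one => exact SimpleGraph.Reachable.refl 1
  | mul x y hx hy ihx ihy =>
    have h1 : (cayleyGraph R S).Reachable (x * y) (1 * y) :=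
      ihx.map (cayMulRight (S := S) y).toHom
    rw [one_mul] at h1
    exact h1.trans ihy
  | inv x hx ihx =>
    have h1 : (cayleyGraph R S).Reachable (x * x⁻¹) (1 * x⁻¹) :=
      ihx.map (cayMulRight (S := S) x⁻¹).toHom
    rw [one_mul, mul_inv_cancel] at h1
    exact h1.symm

lemma cay_reach_iff {g h : R} :
    (cayleyGraph R S).Reachable g h ↔ g * h⁻¹ ∈ Subgroup.closure S := by
  constructor
  · rintro ⟨w⟩
    induction w with
    | nil => simpa using Subgroup.one_mem (Subgroup.closure S)
    | @cons a b c hadj _ ih =>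
      have hab : a * b⁻¹ ∈ Subgroup.closure S := by
        rcases (cay_adj.mp hadj).2 with hs | hs
        · exact Subgroup.subset_closure hs
        · simpa using (Subgroup.inv_mem _ (Subgroup.subset_closure hs))
      have : a * c⁻¹ = (a * b⁻¹) * (b * c⁻¹) := by group
      rw [this]
      exact Subgroup.mul_mem _ hab ih
  · intro hx
    have h1 : (cayleyGraph R S).Reachable ((g * h⁻¹) * h) (1 * h) :=
      (cay_reach_one hx).map (cayMulRight (S := S) h).toHom
    rwa [one_mul, inv_mul_cancel_right] at h1

end Aux

section Copies

variable {V : Type} {Γ : SimpleGraph V} {m : ℕ}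

/-- Inclusion of `Γ` as the `i`-th copy. -/
def inclHom (i : Fin m) : Γ →g copies Γ m where
  toFun v := (i, v)
  map_rel' h := ⟨rfl, h⟩

/-- Projection from `copies Γ m` to `Γ`. -/
def sndHom : copies Γ m →g Γ where
  toFun x := x.2
  map_rel' h := h.2

lemma copies_reach_fst {x y : Fin m × V} (h : (copies Γ m).Reachable x y) :
    x.1 = y.1 := by
  obtain ⟨w⟩ := h
  induction w with
  | nil => rfl
  | cons hadj _ ih => exact hadj.1.trans ih

lemma copies_reach_iff {i : Fin m} {u v : V} :
    (copies Γ m).Reachable (i, u) (i, v) ↔ Γ.Reachable u v := by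
  constructor
  · intro h
    exact h.map (sndHom (Γ := Γ) (m := m))
  · intro h
    exact h.map (inclHom i)

end Copies

/-- If `Γ` is a vertex-transitive non-Cayley graph of order `n` and `m > 0`, then the
disjoint union of `m` copies of `Γ` is a vertex-transitive non-Cayley graph of order `n * m`. -/
theorem noncayley_mul {V : Type} [Fintype V] (Γ : SimpleGraph V) (n m : ℕ)
    (hn : Fintype.card V = n) (hm : 0 < m)
    (hvt : IsVertexTransitive Γ) (hnc : ¬ IsCayleyGraph Γ) :
    Fintype.card (Fin m × V) = n * m ∧
    IsVertexTransitive (copies Γ m) ∧ ¬ IsCayleyGraph (copies Γ m) := by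
  refine ⟨by simp [hn, mul_comm], ?_, ?_⟩
  · rintro ⟨i, u⟩ ⟨j, v⟩
    obtain ⟨f, hf⟩ := hvt u v
    refine ⟨⟨Equiv.prodCongr (Equiv.swap i j) f.toEquiv, ?_⟩, ?_⟩
    · intro p q
      show (Equiv.swap i j p.1 = Equiv.swap i j q.1 ∧ Γ.Adj (f p.2) (f q.2)) ↔ _
      exact and_congr (Equiv.apply_eq_iff_eq _) f.map_adj_iff
    · show (Equiv.swap i j i, f u) = (j, v)
      rw [Equiv.swap_apply_left, hf]
  · rintro ⟨R, _, S, hS, ⟨e⟩⟩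
    apply hnc
    -- setup
    set i₀ : Fin m := ⟨0, hm⟩ with hi₀
    set ψ : V → R := fun u => e (i₀, u) with hψ
    set N : Subgroup R := Subgroup.closure S with hN
    -- adjacency transfer
    have hψadj : ∀ u v : V, Γ.Adj u v ↔ (cayleyGraph R S).Adj (ψ u) (ψ v) := by
      intro u v
      rw [hψ]
      rw [e.map_adj_iff]
      exact ⟨fun h => ⟨rfl, h⟩, fun h => h.2⟩
    -- reachability transfer
    have hψreach : ∀ u v : V, Γ.Reachable u v ↔ ψ u * (ψ v)⁻¹ ∈ N := by
      intro u v
      rw [hN, ← cay_reach_iff]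
      constructor
      · intro h
        have := (copies_reach_iff.mpr h : (copies Γ m).Reachable (i₀, u) (i₀, v))
        exact this.map e.toHom
      · intro h
        have h2 : (copies Γ m).Reachable (i₀, u) (i₀, v) := by
          have h3 := h.map e.symm.toHom
          rw [hψ] at h3
          simpa using h3
        exact copies_reach_iff.mp h2
    -- nonempty V
    have hv0 : Nonempty V := ⟨(e.symm 1).2⟩
    -- component representatives
    have hrep : ∀ c : Γ.ConnectedComponent, ∃ u : V, Γ.connectedComponentMk u = c :=
      fun c => c.exists_rep
    choose rep hrepc using hrep
    set ρ : Γ.ConnectedComponent → R := fun c => ψ (rep c) with hρ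
    -- the bijection χ : V ≃ N × ConnectedComponent Γ
    have hmemN : ∀ u : V, ψ u * (ρ (Γ.connectedComponentMk u))⁻¹ ∈ N := by
      intro u
      apply (hψreach u (rep (Γ.connectedComponentMk u))).mp
      exact (SimpleGraph.ConnectedComponent.eq.mp (hrepc _).symm)
    set χ : V → N × Γ.ConnectedComponent :=
      fun u => (⟨ψ u * (ρ (Γ.connectedComponentMk u))⁻¹, hmemN u⟩, Γ.connectedComponentMk u)
      with hχ
    have hψinj : Function.Injective ψ := by
      intro u v huv
      have : e (i₀, u) = e (i₀, v) := huv
      have := e.toEquiv.injective this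
      exact (Prod.ext_iff.mp this).2
    have hχbij : Function.Bijective χ := by
      constructor
      · intro u v huv
        simp only [hχ, Prod.mk.injEq, Subtype.mk.injEq] at huv
        obtain ⟨h1, h2⟩ := huv
        rw [h2] at h1
        exact hψinj (mul_right_cancel h1)
      · rintro ⟨⟨a, ha⟩, c⟩
        have hreach : (cayleyGraph R S).Reachable (a * ρ c) (ρ c) := by
          rw [cay_reach_iff]
          simpa using ha
        have h2 : (copies Γ m).Reachable (e.symm (a * ρ c)) (i₀, rep c) := by
          have := hreach.map e.symm.toHom
          simpa [hρ, hψ] using this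
        set u : V := (e.symm (a * ρ c)).2 with hu
        have hfst : (e.symm (a * ρ c)).1 = i₀ := copies_reach_fst h2
        have hxu : e.symm (a * ρ c) = (i₀, u) := Prod.ext hfst rfl
        have hψu : ψ u = a * ρ c := by
          rw [hψ]
          simp only
          rw [← hxu]
          exact e.apply_symm_apply _
        have hcomp : Γ.connectedComponentMk u = c := by
          rw [hxu] at h2
          have := copies_reach_iff.mp h2
          rw [← hrepc c]
          exact SimpleGraph.ConnectedComponent.sound this
        refine ⟨u, ?_⟩
        simp only [hχ, Prod.mk.injEq, Subtype.mk.injEq]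
        exact ⟨by rw [hcomp, hψu]; simp [hρ], hcomp⟩
    -- group structure on components
    haveI : Finite Γ.ConnectedComponent := Quot.finite _
    haveI := Fintype.ofFinite Γ.ConnectedComponent
    haveI : Nonempty Γ.ConnectedComponent := ⟨Γ.connectedComponentMk hv0.some⟩
    set k : ℕ := Fintype.card Γ.ConnectedComponent with hk
    haveI : NeZero k := ⟨Fintype.card_ne_zero⟩
    have zeq : Γ.ConnectedComponent ≃ Multiplicative (ZMod k) :=
      Fintype.equivOfCardEq (by simp [hk, ZMod.card])
    -- the Cayley structure
    refine ⟨N × Multiplicative (ZMod k), inferInstance,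
      {p | (p.1 : R) ∈ S ∧ p.2 = 1}, ?_, ?_⟩
    · rintro ⟨a, t⟩ ⟨ha, ht⟩
      exact ⟨by simpa using hS _ ha, by simpa using ht⟩
    · set θ : V ≃ N × Multiplicative (ZMod k) :=
        (Equiv.ofBijective χ hχbij).trans (Equiv.prodCongr (Equiv.refl N) zeq) with hθ
      refine ⟨⟨θ, ?_⟩⟩
      intro u v
      show (cayleyGraph _ _).Adj (θ u) (θ v) ↔ Γ.Adj u v
      rw [cay_adj]
      have hθval : ∀ w : V, θ w =
          (⟨ψ w * (ρ (Γ.connectedComponentMk w))⁻¹, hmemN w⟩, zeq (Γ.connectedComponentMk w)) := by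
        intro w
        rw [hθ]
        rfl
      rw [hθval u, hθval v]
      constructor
      · rintro ⟨hne, hmem⟩
        have hcomp : Γ.connectedComponentMk u = Γ.connectedComponentMk v := by
          rcases hmem with ⟨_, h⟩ | ⟨_, h⟩
          · have := mul_inv_eq_one.mp h
            exact zeq.injective this
          · have := mul_inv_eq_one.mp h
            exact (zeq.injective this).symm
        have hval : ψ u * (ρ (Γ.connectedComponentMk u))⁻¹ *
            (ρ (Γ.connectedComponentMk v) * (ψ v)⁻¹) = ψ u * (ψ v)⁻¹ := by
          rw [hcomp]; group
        have hneψ : ψ u ≠ ψ v := by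
          intro hcontra
          apply hne
          have huv : u = v := hψinj hcontra
          rw [huv]
        apply (hψadj u v).mpr
        rw [cay_adj]
        refine ⟨hneψ, ?_⟩
        rcases hmem with ⟨h, _⟩ | ⟨h, _⟩
        · left
          simpa [hval] using h
        · right
          have hval' : ψ v * (ρ (Γ.connectedComponentMk v))⁻¹ *
              (ρ (Γ.connectedComponentMk u) * (ψ u)⁻¹) = ψ v * (ψ u)⁻¹ := by
            rw [hcomp]; group
          simpa [hval'] using h
      · intro hadj
        have hcomp : Γ.connectedComponentMk u = Γ.connectedComponentMk v :=
          SimpleGraph.ConnectedComponent.sound hadj.reachable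
        have hcay := cay_adj.mp ((hψadj u v).mp hadj)
        have hval : ψ u * (ρ (Γ.connectedComponentMk u))⁻¹ *
            (ρ (Γ.connectedComponentMk v) * (ψ v)⁻¹) = ψ u * (ψ v)⁻¹ := by
          rw [hcomp]; group
        have hval' : ψ v * (ρ (Γ.connectedComponentMk v))⁻¹ *
            (ρ (Γ.connectedComponentMk u) * (ψ u)⁻¹) = ψ v * (ψ u)⁻¹ := by
          rw [hcomp]; group
        constructor
        · intro hcontra
          have h1 := (Prod.ext_iff.mp hcontra).1
          have := Subtype.ext_iff.mp h1
          simp only [hcomp] at this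
          exact hadj.ne (hψinj (mul_right_cancel this))
        · rcases hcay.2 with h | h
          · left
            refine ⟨by simpa [hval] using h, ?_⟩
            simp [hcomp]
          · right
            refine ⟨by simpa [hval'] using h, ?_⟩
            simp [hcomp]
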